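/- Let a₀, a₁, a₂ be points in a real inner product space and let w₀, w₁, w₂ > 0. Suppose b minimizes the function C(x) = w₀‖x−a₀‖ + w₁‖x−a₁‖ + w₂‖x−a₂‖ and b ∉ {a₀, a₁, a₂}. Then, with unit vectors n_i = (b−a_i)/‖b−a_i‖ for i = 0,1,2, the pairwise inner products satisfy ⟨n_i, n_j⟩ = (w_k² − w_i² − w_j²)/(2 w_i w_j) for every permutation {i,j,k} of {0,1,2}. Equivalently, the angles θ₁ between the edges (b,a₀) and (b,a₁)-opposite directions satisfy cos θ₁ = (w₀² + w₁² − w₂²)/(2w₀w₁), cos θ₂ = (w₀² + w₂² − w₁²)/(2w₀w₂), and cos(θ₁+θ₂) = (w₀² − w₁² − w₂²)/(2w₁w₂). -/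

import Mathlib

open ContinuousLinearMap

lemma my_hasFDerivAt_norm {E : Type*} [NormedAddCommGroup E] [InnerProductSpace ℝ E]
    {x : E} (hx : x ≠ 0) :
    HasFDerivAt (fun y : E => ‖y‖) (‖x‖⁻¹ • innerSL ℝ x) x := by
  have hns : HasFDerivAt (fun y : E => ‖y‖ ^ 2) (2 • (innerSL ℝ x)) x :=
    (hasStrictFDerivAt_norm_sq x).hasFDerivAt
  have hsq : (‖x‖ : ℝ) ^ 2 ≠ 0 := pow_ne_zero _ (norm_ne_zero_iff.2 hx)
  have hsqrt : HasDerivAt Real.sqrt (1 / (2 * Real.sqrt (‖x‖ ^ 2))) (‖x‖ ^ 2) :=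
    Real.hasDerivAt_sqrt hsq
  have h := hsqrt.comp_hasFDerivAt x hns
  have hfun : (Real.sqrt ∘ fun y : E => ‖y‖ ^ 2) = fun y : E => ‖y‖ := by
    funext y
    simp [Function.comp, Real.sqrt_sq (norm_nonneg y)]
  rw [hfun] at h
  refine h.congr_fderiv ?_
  rw [Real.sqrt_sq (norm_nonneg x)]
  ext y
  have hx0 : ‖x‖ ≠ 0 := norm_ne_zero_iff.2 hx
  simp only [ContinuousLinearMap.smul_apply, smul_eq_mul, nsmul_eq_mul, Nat.cast_ofNat]
  field_simp

/-- Branching angles at an (uncollapsed) weighted Fermat point: if `b` minimizes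
`C(x) = Σ_i w_i ‖x - a_i‖` and `b` is none of the `a_i`, then the unit vectors
`n_i = (b - a_i)/‖b - a i‖` satisfy `⟨n_i, n_j⟩ = (w_k² - w_i² - w_j²)/(2 w_i w_j)`
for every permutation `{i, j, k}` of `{0, 1, 2}`. -/
theorem fermat_point_branching_angles {E : Type*} [NormedAddCommGroup E]
    [InnerProductSpace ℝ E] (a : Fin 3 → E) (w : Fin 3 → ℝ) (hw : ∀ i, 0 < w i)
    (b : E) (hb : ∀ i, b ≠ a i)
    (hmin : ∀ x : E, ∑ i, w i * ‖b - a i‖ ≤ ∑ i, w i * ‖x - a i‖) :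
    ∀ i j k : Fin 3, i ≠ j → j ≠ k → i ≠ k →
      (inner ℝ (‖b - a i‖⁻¹ • (b - a i)) (‖b - a j‖⁻¹ • (b - a j)) : ℝ)
        = (w k ^ 2 - w i ^ 2 - w j ^ 2) / (2 * w i * w j) := by
  set n : Fin 3 → E := fun i => ‖b - a i‖⁻¹ • (b - a i) with hn
  have hne : ∀ i, b - a i ≠ 0 := fun i => sub_ne_zero.2 (hb i)
  have hnorm : ∀ i, ‖n i‖ = 1 := by
    intro i
    rw [hn, norm_smul, norm_inv, norm_norm, inv_mul_cancel₀ (norm_ne_zero_iff.2 (hne i))]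
  -- derivative of C at b
  have hC : HasFDerivAt (fun x : E => ∑ i, w i * ‖x - a i‖)
      (∑ i, w i • (‖b - a i‖⁻¹ • innerSL ℝ (b - a i))) b := by
    apply HasFDerivAt.fun_sum
    intro i _
    have h1 : HasFDerivAt (fun x : E => x - a i) (ContinuousLinearMap.id ℝ E) b :=
      (hasFDerivAt_id b).sub_const (a i)
    have h2 : HasFDerivAt (fun x : E => ‖x - a i‖) (‖b - a i‖⁻¹ • innerSL ℝ (b - a i)) b := by
      simpa [Function.comp_def] using (my_hasFDerivAt_norm (hne i)).comp b h1
    simpa [smul_eq_mul, Pi.smul_def] using h2.const_smul (w i)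
  have hloc : IsLocalMin (fun x : E => ∑ i, w i * ‖x - a i‖) b :=
    Filter.Eventually.of_forall hmin
  have hzero := hloc.hasFDerivAt_eq_zero hC
  -- get Σ w i • n i = 0
  have hvec : ∑ i, w i • n i = 0 := by
    have h4 : ∀ y : E, (inner ℝ (∑ i, w i • n i) y : ℝ) = 0 := by
      intro y
      have hy := congrArg (fun L => L y) hzero
      simp only [ContinuousLinearMap.sum_apply, ContinuousLinearMap.smul_apply,
        ContinuousLinearMap.zero_apply, smul_eq_mul, innerSL_apply_apply] at hy
      rw [sum_inner, ← hy]
      refine Finset.sum_congr rfl fun i _ => ?_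
      rw [hn]
      simp [real_inner_smul_left, mul_assoc]
    exact inner_self_eq_zero.mp (h4 (∑ i, w i • n i))
  intro i j k hij hjk hik
  -- sum over Fin 3 with distinct i j k
  have hsum : w i • n i + w j • n j + w k • n k = 0 := by
    have huniv : ({i, j, k} : Finset (Fin 3)) = Finset.univ := by
      apply Finset.eq_univ_of_card
      rw [Finset.card_insert_of_notMem (by simp [hij, hik]),
        Finset.card_insert_of_notMem (by simp [hjk]), Finset.card_singleton]
      rfl
    have h := hvec
    rw [← huniv, Finset.sum_insert (by simp [hij, hik]), Finset.sum_insert (by simp [hjk]),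
      Finset.sum_singleton] at h
    rw [add_assoc]
    exact h
  have heq : w i • n i + w j • n j = -(w k • n k) := eq_neg_of_add_eq_zero_left hsum
  have h5 : (inner ℝ (w i • n i + w j • n j) (w i • n i + w j • n j) : ℝ)
      = inner ℝ (w k • n k) (w k • n k) := by
    rw [heq, inner_neg_neg]
  rw [real_inner_add_add_self] at h5
  simp only [real_inner_smul_left, real_inner_smul_right, real_inner_self_eq_norm_sq] at h5
  have hsm : ∀ l : Fin 3, ‖w l • n l‖ ^ 2 = w l ^ 2 := fun l => by
    rw [norm_smul, hnorm l, Real.norm_eq_abs, mul_one, sq_abs]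
  rw [hsm i, hsm j, hsm k] at h5
  simp only [hn] at h5
  have hwi := (hw i).ne'
  have hwj := (hw j).ne'
  rw [eq_div_iff (by positivity)]
  linear_combination h5
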